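/- arXiv:1012.4727 — 4 statements merged into one kernel-verified Lean document; each statement's English description precedes it below -/
import Mathlib

section
/- Let φ be a real number in [0,1) and for each k = 1, ..., n let β_k ∈ {0/8,...,7/8} satisfy |2^{k-1}φ - β_k|_{mod 1} < 1/8. Define bits x_n, x_{n+1}, x_{n+2} by writing β_n = 0.x_n x_{n+1} x_{n+2} in binary, and for k = n-1 down to 1 define x_k ∈ {0,1} to be the unique bit such that |0.x_k x_{k+1} x_{k+2} - β_k|_{mod 1} < 1/4. Then the resulting binary fraction satisfies |0.x_1 x_2 ... x_{n+2} - φ|_{mod 1} < 2^{-(n+2)}. -/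
open Real Finset

/-- Distance from a real number to the nearest integer ("|x| mod 1"). -/
noncomputable def distMod1 (x : ℝ) : ℝ := |x - round x|

lemma distMod1_le_int (x : ℝ) (m : ℤ) : distMod1 x ≤ |x - m| := by
  rw [distMod1, abs_sub_round_eq_min]
  rcases le_or_gt m ⌊x⌋ with h | h
  · calc min (Int.fract x) (1 - Int.fract x) ≤ Int.fract x := min_le_left _ _
      _ ≤ x - m := by
        rw [Int.fract]
        have : (m : ℝ) ≤ ⌊x⌋ := by exact_mod_cast h
        linarith
      _ ≤ |x - m| := le_abs_self _
  · calc min (Int.fract x) (1 - Int.fract x) ≤ 1 - Int.fract x := min_le_right _ _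
      _ ≤ m - x := by
        rw [Int.fract]
        have : (⌊x⌋ : ℝ) + 1 ≤ m := by exact_mod_cast h
        linarith
      _ ≤ |x - m| := by rw [abs_sub_comm]; exact le_abs_self _

lemma distMod1_neg (x : ℝ) : distMod1 (-x) = distMod1 x := by
  have key : ∀ y : ℝ, distMod1 (-y) ≤ distMod1 y := by
    intro y
    calc distMod1 (-y) ≤ |-y - ((-round y : ℤ) : ℝ)| := distMod1_le_int _ _
      _ = |y - round y| := by
            push_cast
            rw [show -y - -(round y:ℝ) = -(y - round y) by ring, abs_neg]
      _ = distMod1 y := rfl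
  refine le_antisymm (key x) ?_
  have := key (-x)
  rwa [neg_neg] at this

lemma distMod1_add (a b : ℝ) : distMod1 (a + b) ≤ distMod1 a + distMod1 b := by
  calc distMod1 (a + b) ≤ |a + b - ((round a + round b : ℤ) : ℝ)| := distMod1_le_int _ _
    _ = |(a - round a) + (b - round b)| := by push_cast; ring_nf
    _ ≤ |a - round a| + |b - round b| := abs_add_le _ _
    _ = distMod1 a + distMod1 b := rfl

lemma distMod1_half_lb (y : ℝ) (t : ℤ) : 1/2 - |y - ((t:ℝ) + 1/2)| ≤ distMod1 y := by
  rw [distMod1]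
  have h : (1:ℝ)/2 ≤ |(t:ℝ) + 1/2 - round y| := by
    have : ((t:ℝ) + 1/2 - round y) = ((t - round y : ℤ) : ℝ) + 1/2 := by push_cast; ring
    rw [this]
    rcases le_or_gt 0 (t - round y : ℤ) with h | h
    · have : (0:ℝ) ≤ ((t - round y : ℤ) : ℝ) := by exact_mod_cast h
      rw [abs_of_nonneg (by linarith)]; linarith
    · have h' : (t - round y : ℤ) ≤ -1 := by omega
      have : ((t - round y : ℤ) : ℝ) ≤ -1 := by exact_mod_cast h'
      rw [abs_of_nonpos (by linarith)]; linarith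
  have tri : |(t:ℝ) + 1/2 - round y| ≤ |y - ((t:ℝ)+1/2)| + |y - round y| := by
    have : (t:ℝ) + 1/2 - round y = -(y - ((t:ℝ)+1/2)) + (y - round y) := by ring
    rw [this]
    calc _ ≤ |-(y - ((t:ℝ)+1/2))| + |y - round y| := abs_add_le _ _
      _ = _ := by rw [abs_neg]
  linarith

lemma geo (a m : ℕ) : ∑ j ∈ Finset.Icc a (a + m), ((2:ℝ)⁻¹)^j = 2⁻¹^a * (2 - 2⁻¹^m) := by
  induction m with
  | zero => simp; ring
  | succ m ih =>
    rw [show a + (m+1) = (a + m) + 1 by ring, Finset.sum_Icc_succ_top (by omega), ih,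
      pow_succ, pow_add]
    ring

/-- Correctness of Kitaev's classical post-processing: if each β_k ∈ {0/8,…,7/8}
approximates 2^{k-1}φ within 1/8 (mod 1), the bits x_n, x_{n+1}, x_{n+2} are read off
from β_n = 0.x_n x_{n+1} x_{n+2}, and each earlier bit x_k is chosen so that
|0.x_k x_{k+1} x_{k+2} - β_k|_{mod 1} < 1/4, then
|0.x_1 x_2 … x_{n+2} - φ|_{mod 1} < 2^{-(n+2)}. -/
theorem stmt_2 (n : ℕ) (hn : 1 ≤ n) (φ : ℝ) (hφ : φ ∈ Set.Ico (0 : ℝ) 1)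
    (β : ℕ → ℝ) (hβ : ∀ k ∈ Finset.Icc 1 n, ∃ j : Fin 8, β k = (j : ℝ) / 8)
    (hβapprox : ∀ k ∈ Finset.Icc 1 n, distMod1 (2 ^ (k - 1) * φ - β k) < 1 / 8)
    (x : ℕ → ℝ) (hbits : ∀ k, x k = 0 ∨ x k = 1)
    (hinit : β n = x n / 2 + x (n + 1) / 4 + x (n + 2) / 8)
    (hstep : ∀ k, 1 ≤ k → k < n →
      distMod1 (x k / 2 + x (k + 1) / 4 + x (k + 2) / 8 - β k) < 1 / 4) :
    distMod1 ((∑ j ∈ Finset.Icc 1 (n + 2), x j / 2 ^ j) - φ) < 1 / 2 ^ (n + 2) := by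
  have hx01 : ∀ j, (0:ℝ) ≤ x j ∧ x j ≤ 1 := by
    intro j; rcases hbits j with h | h <;> simp [h]
  set S : ℕ → ℝ := fun k => ∑ j ∈ Finset.Icc k (n+2), x j * 2^(k-1) / 2^j with hSdef
  have hsplit : ∀ k, k ≤ n + 2 → ∀ c : ℕ → ℝ, ∑ j ∈ Finset.Icc k (n+2), c j
      = c k + ∑ j ∈ Finset.Icc (k+1) (n+2), c j := by
    intro k hk c
    have : Finset.Icc k (n+2) = insert k (Finset.Icc (k+1) (n+2)) := by
      ext j; simp only [Finset.mem_Icc, Finset.mem_insert]; omega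
    rw [this, Finset.sum_insert (by simp only [Finset.mem_Icc]; omega)]
  have key : ∀ d k, k + d = n → 1 ≤ k →
      distMod1 (S k - 2^(k-1) * φ) < 2^(k-1) / 2^(n+2) := by
    intro d
    induction d with
    | zero =>
      intro k hkd _
      have hk : k = n := by omega
      subst hk
      have e1 : (2:ℝ)^k = 2^(k-1) * 2 := by
        rw [← pow_succ]; congr 1; omega
      have e2 : (2:ℝ)^(k+1) = 2^(k-1) * 4 := by
        rw [show k+1 = (k-1)+2 by omega, pow_add]; norm_num
      have e3 : (2:ℝ)^(k+2) = 2^(k-1) * 8 := by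
        rw [show k+2 = (k-1)+3 by omega, pow_add]; norm_num
      have hpos : (0:ℝ) < 2^(k-1) := by positivity
      have hSn : S k = β k := by
        show (∑ j ∈ Finset.Icc k (k+2), x j * 2^(k-1)/2^j) = β k
        rw [hsplit k (by omega), hsplit (k+1) (by omega), hsplit (k+2) (by omega)]
        rw [show Finset.Icc (k+2+1) (k+2) = ∅ by rw [Finset.Icc_eq_empty]; omega]
        rw [Finset.sum_empty, hinit, e1, e2, e3]
        field_simp
        ring
      have happ := hβapprox k (by simp only [Finset.mem_Icc]; omega)
      rw [hSn, ← distMod1_neg, neg_sub]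
      rw [show (2:ℝ)^(k-1)/2^(k+2) = 1/8 by rw [e3]; field_simp]
      exact happ
    | succ d ih =>
      intro k hkd hk1
      have hkn : k < n := by omega
      have IH := ih (k+1) (by omega) (by omega)
      set ε := (2:ℝ)^(k-1)/2^(n+2) with hε
      have hεpos : 0 < ε := by positivity
      have e1 : (2:ℝ)^k = 2^(k-1) * 2 := by rw [← pow_succ]; congr 1; omega
      have hpos : (0:ℝ) < 2^(k-1) := by positivity
      have hpos2 : (0:ℝ) < 2^(n+2) := by positivity
      have IH2 : distMod1 (S (k+1) - 2^k * φ) < 2*ε := by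
        have hb : (2:ℝ)^(k+1-1)/2^(n+2) = 2*ε := by
          rw [show k+1-1 = k from rfl, hε, e1]; ring
        rw [← hb]; exact IH
      set y := S (k+1) - 2^k * φ with hy
      set m := round y with hm
      have hym : |y - (m:ℝ)| < 2*ε := IH2
      have hdecomp : S k - 2^(k-1)*φ = x k / 2 + y / 2 := by
        have hSk : S k = x k / 2 + S (k+1) / 2 := by
          show (∑ j ∈ Finset.Icc k (n+2), x j * 2^(k-1)/2^j)
             = x k/2 + (∑ j ∈ Finset.Icc (k+1) (n+2), x j * 2^(k+1-1)/2^j)/2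
          rw [hsplit k (by omega), Finset.sum_div]
          congr 1
          · rw [e1]; field_simp
          · refine Finset.sum_congr rfl fun j hj => ?_
            rw [show k+1-1 = k from rfl, e1]
            ring
        rw [hSk, hy, e1]; ring
      set T : ℝ := ∑ j ∈ Finset.Icc (k+3) (n+2), x j * 2^(k-1)/2^j with hTdef
      have hTeq : S k = x k/2 + x (k+1)/4 + x (k+2)/8 + T := by
        have e2 : (2:ℝ)^(k+1) = 2^(k-1) * 4 := by
          rw [show k+1 = (k-1)+2 by omega, pow_add]; norm_num
        have e3 : (2:ℝ)^(k+2) = 2^(k-1) * 8 := by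
          rw [show k+2 = (k-1)+3 by omega, pow_add]; norm_num
        show (∑ j ∈ Finset.Icc k (n+2), x j * 2^(k-1)/2^j) = _
        rw [hsplit k (by omega), hsplit (k+1) (by omega), hsplit (k+2) (by omega)]
        rw [hTdef, e1, e2, e3]
        field_simp
        ring
      have hT0 : 0 ≤ T := by
        refine Finset.sum_nonneg fun j hj => ?_
        have := (hx01 j).1
        positivity
      have hTle : T ≤ 1/8 - ε := by
        have hstep1 : T ≤ ∑ j ∈ Finset.Icc (k+3) (n+2), 2^(k-1) * ((2:ℝ)⁻¹)^j := by
          refine Finset.sum_le_sum fun j hj => ?_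
          rw [inv_pow]
          rw [div_eq_mul_inv, mul_comm (x j) _, mul_assoc]
          have h1 : x j * (2^j : ℝ)⁻¹ ≤ 1 * (2^j : ℝ)⁻¹ := by
            apply mul_le_mul_of_nonneg_right (hx01 j).2 (by positivity)
          calc (2:ℝ)^(k-1) * (x j * (2^j:ℝ)⁻¹) ≤ 2^(k-1) * (1 * (2^j:ℝ)⁻¹) := by
                exact mul_le_mul_of_nonneg_left h1 (le_of_lt hpos)
            _ = 2^(k-1) * (2^j:ℝ)⁻¹ := by ring
        rw [← Finset.mul_sum] at hstep1
        rw [show n+2 = (k+3) + (n-1-k) by omega, geo] at hstep1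
        have hval : (2:ℝ)^(k-1) * (2⁻¹^(k+3) * (2 - 2⁻¹^(n-1-k))) = 1/8 - ε := by
          have pk3 : (2:ℝ)^(k+3) = 2^(k-1)*16 := by
            rw [show k+3 = (k-1)+4 by omega, pow_add]; norm_num
          have pn : (2:ℝ)^(n+2) = 2^(k-1) * 16 * 2^(n-1-k) := by
            rw [show n+2 = (k+3)+(n-1-k) by omega, pow_add, pk3]
          have hq : (0:ℝ) < 2^(n-1-k) := by positivity
          rw [hε, inv_pow, inv_pow, pk3, pn]
          field_simp
          ring
        rw [hval] at hstep1
        -- careful: hstep1's endpoint was rewritten; T has endpoint n+2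
        exact hstep1
      have hup : distMod1 (S k - 2^(k-1)*φ) < 1/2 - ε := by
        have h1 : distMod1 (x k/2 + x (k+1)/4 + x (k+2)/8 - β k) < 1/4 := hstep k hk1 hkn
        have h2 : distMod1 (β k - 2^(k-1)*φ) < 1/8 := by
          rw [← distMod1_neg, neg_sub]
          exact hβapprox k (by simp only [Finset.mem_Icc]; omega)
        have hd : S k - 2^(k-1)*φ
            = T + ((x k/2 + x (k+1)/4 + x (k+2)/8 - β k) + (β k - 2^(k-1)*φ)) := by
          rw [hTeq]; ring
        have hTd : distMod1 T ≤ T := by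
          have := distMod1_le_int T 0
          simpa [abs_of_nonneg hT0] using this
        calc distMod1 (S k - 2^(k-1)*φ)
            = distMod1 (T + ((x k/2 + x (k+1)/4 + x (k+2)/8 - β k) + (β k - 2^(k-1)*φ))) := by
              rw [hd]
          _ ≤ distMod1 T + distMod1 ((x k/2 + x (k+1)/4 + x (k+2)/8 - β k) + (β k - 2^(k-1)*φ)) :=
              distMod1_add _ _
          _ ≤ distMod1 T + (distMod1 (x k/2 + x (k+1)/4 + x (k+2)/8 - β k)
                + distMod1 (β k - 2^(k-1)*φ)) := by
              have := distMod1_add (x k/2 + x (k+1)/4 + x (k+2)/8 - β k) (β k - 2^(k-1)*φ)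
              linarith
          _ < 1/2 - ε := by linarith
      have good : ∀ t : ℤ, (x k/2 + (m:ℝ)/2 = t) → distMod1 (S k - 2^(k-1)*φ) < ε := by
        intro t htt
        rw [hdecomp]
        calc distMod1 (x k/2 + y/2) ≤ |x k/2 + y/2 - (t:ℝ)| := distMod1_le_int _ _
          _ = |y - (m:ℝ)|/2 := by
              rw [← htt, show x k/2 + y/2 - (x k/2 + (m:ℝ)/2) = (y - m)/2 by ring, abs_div]
              norm_num
          _ < ε := by linarith
      have bad : ∀ t : ℤ, (x k/2 + (m:ℝ)/2 = (t:ℝ) + 1/2) → False := by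
        intro t htt
        have hlb := distMod1_half_lb (x k/2 + y/2) t
        have heq : |x k/2 + y/2 - ((t:ℝ) + 1/2)| = |y - (m:ℝ)|/2 := by
          rw [← htt, show x k/2 + y/2 - (x k/2 + (m:ℝ)/2) = (y-m)/2 by ring, abs_div]
          norm_num
        rw [heq] at hlb
        rw [hdecomp] at hup
        linarith
      rcases hbits k with hxk | hxk <;> rcases Int.even_or_odd m with ⟨t, ht⟩ | ⟨t, ht⟩
      · refine good t ?_
        have htr : (m:ℝ) = t + t := by exact_mod_cast ht
        rw [hxk, htr]; ring
      · exact absurd (by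
          have htr : (m:ℝ) = 2*t + 1 := by exact_mod_cast ht
          rw [hxk, htr]; ring : x k/2 + (m:ℝ)/2 = (t:ℝ) + 1/2) (fun h => bad t h)
      · exact absurd (by
          have htr : (m:ℝ) = t + t := by exact_mod_cast ht
          rw [hxk, htr]; ring : x k/2 + (m:ℝ)/2 = (t:ℝ) + 1/2) (fun h => bad t h)
      · refine good (t+1) ?_
        have htr : (m:ℝ) = 2*t + 1 := by exact_mod_cast ht
        rw [hxk, htr]; push_cast; ring
  have final := key (n-1) 1 (by omega) le_rfl
  have hS1 : S 1 = ∑ j ∈ Finset.Icc 1 (n+2), x j / 2^j := by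
    refine Finset.sum_congr rfl fun j hj => ?_
    norm_num
  rw [← hS1]
  have : (2:ℝ)^(1-1) = 1 := by norm_num
  simpa [this] using final
end

section
/- In Kitaev's post-processing iteration, at each step k < n exactly one of the two candidates satisfies the selection condition: given β_k with |2^{k-1}φ - β_k|_{mod 1} < 1/8 and bits x_{k+1}, x_{k+2} with |0.x_{k+1}x_{k+2} - 2^k φ|_{mod 1} < 1/8 (say), exactly one bit b ∈ {0,1} satisfies |0.b x_{k+1} x_{k+2} - β_k|_{mod 1} < 1/4. -/
open Real

lemma distMod1_lt_of_near (x : ℝ) (m : ℤ) (hr : |x - m| < 1/4) :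
    distMod1 x < 1/4 :=
  lt_of_le_of_lt (round_le x m) hr

lemma distMod1_not_lt_of_half (x : ℝ) (m : ℤ) (hr : |x - m - 1/2| < 1/4) :
    ¬ distMod1 x < 1/4 := by
  unfold distMod1
  push_neg
  set q := round x with hq
  rw [abs_lt] at hr
  rcases le_or_gt q m with h | h
  · have hqm : (q:ℝ) ≤ m := by exact_mod_cast h
    rw [abs_of_nonneg (by linarith)]
    linarith
  · have hmq : (m:ℝ) ≤ (q:ℝ) - 1 := by exact_mod_cast Int.le_sub_one_of_lt h
    rw [abs_of_nonpos (by linarith)]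
    linarith

/-- At each step of Kitaev's post-processing, exactly one candidate bit works:
given β ∈ {0/8,…,7/8} with |φ - β|_{mod 1} < 1/8 (where φ stands for the shifted phase
2^{k-1}φ) and bits x₁, x₂ with |x₁/2 + x₂/4 - 2φ|_{mod 1} < 1/8, there is exactly one
bit b ∈ {0,1} with |b/2 + x₁/4 + x₂/8 - β|_{mod 1} < 1/4. -/
theorem stmt_3 (φ β x₁ x₂ : ℝ) (hβ : ∃ j : Fin 8, β = (j : ℝ) / 8)
    (hx₁ : x₁ = 0 ∨ x₁ = 1) (hx₂ : x₂ = 0 ∨ x₂ = 1)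
    (hβapprox : distMod1 (φ - β) < 1 / 8)
    (hnext : distMod1 (x₁ / 2 + x₂ / 4 - 2 * φ) < 1 / 8) :
    ∃! b : ℝ, (b = 0 ∨ b = 1) ∧ distMod1 (b / 2 + x₁ / 4 + x₂ / 8 - β) < 1 / 4 := by
  set n := round (x₁ / 2 + x₂ / 4 - 2 * φ) with hn
  set k := round (φ - β) with hk
  have ht : |x₁ / 2 + x₂ / 4 - 2 * φ - n| < 1/8 := hnext
  have hs : |φ - β - k| < 1/8 := hβapprox
  set e : ℝ := (φ - β - k) + (x₁ / 2 + x₂ / 4 - 2 * φ - n)/2 with he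
  have key : ∀ b : ℝ, b / 2 + x₁ / 4 + x₂ / 8 - β = b/2 + (n:ℝ)/2 + k + e := by
    intro b; rw [he]; ring
  have herr : |e| < 3/16 := by
    calc |e| ≤ |φ - β - (k:ℝ)| + |(x₁ / 2 + x₂ / 4 - 2 * φ - n)/2| := abs_add_le _ _
    _ < 1/8 + 1/16 := by
        have : |(x₁ / 2 + x₂ / 4 - 2 * φ - n)/2| < 1/16 := by
          rw [abs_div, abs_two]; linarith
        linarith
    _ = 3/16 := by norm_num
  rcases Int.even_or_odd n with ⟨m, hm⟩ | ⟨m, hm⟩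
  · refine ⟨0, ⟨Or.inl rfl, ?_⟩, ?_⟩
    · apply distMod1_lt_of_near _ (m + k)
      have hc : ((m + k : ℤ) : ℝ) = (m:ℝ) + k := by push_cast; ring
      have hnm : (n:ℝ) = m + m := by exact_mod_cast hm
      have h1 : (0:ℝ)/2 + x₁/4 + x₂/8 - β - ((m:ℝ) + k) = e := by
        rw [key]; rw [hnm]; ring
      rw [hc, h1]; linarith [herr]
    · rintro b ⟨hb | hb, hbd⟩
      · exact hb
      · exfalso
        refine distMod1_not_lt_of_half _ (m + k) ?_ hbd
        have hc : ((m + k : ℤ) : ℝ) = (m:ℝ) + k := by push_cast; ring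
        have hnm : (n:ℝ) = m + m := by exact_mod_cast hm
        have h1 : b/2 + x₁/4 + x₂/8 - β - ((m:ℝ) + k) - 1/2 = e := by
          rw [key, hb, hnm]; ring
        rw [hc, h1]; linarith [herr]
  · refine ⟨1, ⟨Or.inr rfl, ?_⟩, ?_⟩
    · apply distMod1_lt_of_near _ (m + 1 + k)
      have hc : ((m + 1 + k : ℤ) : ℝ) = (m:ℝ) + 1 + k := by push_cast; ring
      have hnm : (n:ℝ) = 2*m + 1 := by exact_mod_cast hm
      have h1 : (1:ℝ)/2 + x₁/4 + x₂/8 - β - ((m:ℝ) + 1 + k) = e := by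
        rw [key, hnm]; ring
      rw [hc, h1]; linarith [herr]
    · rintro b ⟨hb | hb, hbd⟩
      · exfalso
        refine distMod1_not_lt_of_half _ (m + k) ?_ hbd
        have hc : ((m + k : ℤ) : ℝ) = (m:ℝ) + k := by push_cast; ring
        have hnm : (n:ℝ) = 2*m + 1 := by exact_mod_cast hm
        have h1 : b/2 + x₁/4 + x₂/8 - β - ((m:ℝ) + k) - 1/2 = e := by
          rw [key, hb, hnm]; ring
        rw [hc, h1]; linarith [herr]
      · exact hb
end

section
/- Let φ ∈ [0,1) and suppose x/2^n ≤ φ ≤ (x+1)/2^n for an integer x. The quantum phase estimation procedure on n qubits, which measures the state QFT†·(2^{-n/2} Σ_{k=0}^{2^n-1} e^{2πiφk}|k⟩) in the computational basis, returns outcome y with probability |2^{-n} Σ_{k=0}^{2^n-1} e^{2πi(φ - y/2^n)k}|². The total probability of returning x or x+1 (mod 2^n) is at least 8/π². -/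
open Real Complex Finset

set_option maxHeartbeats 1000000 in
private lemma poly1 (s : ℝ) (h0 : 0 ≤ s) (hs : s ≤ 3/5) :
    (1 - s^2)^2 ≤ (1 - 9.8697*s^2/8)^2 * (1 + s^2) := by
  nlinarith [sq_nonneg s, sq_nonneg (s*s), mul_nonneg (sq_nonneg s) (sub_nonneg.2 hs),
    mul_nonneg (mul_nonneg (sq_nonneg s) (sub_nonneg.2 hs)) (sub_nonneg.2 hs),
    mul_nonneg (mul_nonneg (sq_nonneg s) (sq_nonneg s)) (sq_nonneg s)]

set_option maxHeartbeats 1000000 in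
private lemma poly2 (w : ℝ) (h0 : 0 ≤ w) (h1 : w ≤ 2/5) :
    ((1:ℝ)-(1-w)^2)^2 ≤ (2.4674*w^2)*(1 - 9.8697*w^2/16)^2 * (1+(1-w)^2) := by
  nlinarith [sq_nonneg w, sq_nonneg (w*w), mul_nonneg (sq_nonneg w) (sub_nonneg.2 h1),
    mul_nonneg (mul_nonneg (sq_nonneg w) (sub_nonneg.2 h1)) (sub_nonneg.2 h1),
    mul_nonneg (mul_nonneg (sq_nonneg w) (sq_nonneg w)) (sq_nonneg w),
    mul_nonneg (mul_nonneg (sq_nonneg w) (sq_nonneg w)) (sub_nonneg.2 h1)]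

private lemma keyS (s : ℝ) (h0 : 0 ≤ s) (h1 : s ≤ 1) :
    (1 - s^2)^2 ≤ (Real.cos (π*s/2))^2 * (1 + s^2) := by
  have hπ1 : 3.141592 < π := Real.pi_gt_d6
  have hπ2 : π < 3.141593 := Real.pi_lt_d6
  have hπl : 9.8696 ≤ π^2 := by nlinarith
  have hπu : π^2 ≤ 9.8697 := by nlinarith
  rcases le_or_gt s (3/5) with hs | hs
  · have hc : 1 - (π*s/2)^2/2 ≤ Real.cos (π*s/2) := Real.one_sub_sq_div_two_le_cos
    have hb : (π*s/2)^2/2 ≤ 9.8697*s^2/8 := by nlinarith [sq_nonneg s]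
    have hpos : 0 ≤ 1 - 9.8697*s^2/8 := by nlinarith
    have hc2 : 1 - 9.8697*s^2/8 ≤ Real.cos (π*s/2) := by linarith
    have hsq : (1 - 9.8697*s^2/8)^2 ≤ (Real.cos (π*s/2))^2 :=
      pow_le_pow_left₀ hpos hc2 2
    calc (1 - s^2)^2 ≤ (1 - 9.8697*s^2/8)^2 * (1+s^2) := poly1 s h0 hs
      _ ≤ (Real.cos (π*s/2))^2 * (1+s^2) :=
          mul_le_mul_of_nonneg_right hsq (by positivity)
  · rcases eq_or_lt_of_le h1 with rfl | h1'
    · norm_num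
    · obtain ⟨w, hw0, hw1, hsw⟩ : ∃ w : ℝ, 0 < w ∧ w < 2/5 ∧ s = 1 - w :=
        ⟨1 - s, by linarith, by linarith, by ring⟩
      subst hsw
      have htpos : 0 < π*w/2 := by positivity
      have ht1 : π*w/2 ≤ 1 := by nlinarith
      have hsin : π*w/2 - (π*w/2)^3/4 < Real.sin (π*w/2) := by
        have := Real.sin_gt_sub_cube htpos; nlinarith [pow_pos htpos 3]
      have hcos : Real.cos (π*(1-w)/2) = Real.sin (π*w/2) := by
        rw [← Real.cos_pi_div_two_sub (π*w/2)]; ring_nf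
      have htn : 0 ≤ π*w/2 - (π*w/2)^3/4 := by nlinarith [sq_nonneg (π*w/2)]
      have hsq : (π*w/2 - (π*w/2)^3/4)^2 ≤ (Real.sin (π*w/2))^2 :=
        pow_le_pow_left₀ htn hsin.le 2
      rw [hcos]
      have hinpos : 0 ≤ 1 - 9.8697*w^2/16 := by nlinarith [sq_nonneg w]
      have hin : 1 - 9.8697*w^2/16 ≤ 1 - (π*w/2)^2/4 := by nlinarith [sq_nonneg w]
      have chain : (2.4674*w^2)*(1 - 9.8697*w^2/16)^2 ≤ (π*w/2 - (π*w/2)^3/4)^2 := by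
        have expand : (π*w/2 - (π*w/2)^3/4)^2 = (π*w/2)^2*(1-(π*w/2)^2/4)^2 := by ring
        rw [expand]
        have h1' : (1 - 9.8697*w^2/16)^2 ≤ (1-(π*w/2)^2/4)^2 := pow_le_pow_left₀ hinpos hin 2
        have h2' : 2.4674*w^2 ≤ (π*w/2)^2 := by nlinarith [sq_nonneg w]
        calc 2.4674*w^2*(1 - 9.8697*w^2/16)^2 ≤ 2.4674*w^2*(1-(π*w/2)^2/4)^2 :=
              mul_le_mul_of_nonneg_left h1' (by positivity)
          _ ≤ (π*w/2)^2*(1-(π*w/2)^2/4)^2 := mul_le_mul_of_nonneg_right h2' (sq_nonneg _)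
      calc (1-(1-w)^2)^2 ≤ (2.4674*w^2)*(1 - 9.8697*w^2/16)^2 * (1+(1-w)^2) :=
            poly2 w hw0.le hw1.le
        _ ≤ (π*w/2 - (π*w/2)^3/4)^2 * (1+(1-w)^2) :=
            mul_le_mul_of_nonneg_right chain (by positivity)
        _ ≤ (Real.sin (π*w/2))^2 * (1+(1-w)^2) :=
            mul_le_mul_of_nonneg_right hsq (by positivity)

private lemma keyS' (s : ℝ) (h0 : -1 ≤ s) (h1 : s ≤ 1) :
    (1 - s^2)^2 ≤ (Real.cos (π*s/2))^2 * (1 + s^2) := by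
  rcases le_or_gt 0 s with h | h
  · exact keyS s h h1
  · have := keyS (-s) (by linarith) (by linarith)
    rw [show π*(-s)/2 = -(π*s/2) by ring, Real.cos_neg] at this
    simpa using this

private lemma keyTheta (θ : ℝ) (h0 : 0 < θ) (h1 : θ < 1) :
    8/π^2 ≤ (Real.sin (π*θ))^2/(π*θ)^2 + (Real.sin (π*θ))^2/(π*(1-θ))^2 := by
  have hπ := Real.pi_pos
  have hc : Real.sin (π*θ) = Real.cos (π*(2*θ-1)/2) := by
    rw [show π*(2*θ-1)/2 = -(π/2 - π*θ) by ring, Real.cos_neg, Real.cos_pi_div_two_sub]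
  have hks := keyS' (2*θ-1) (by linarith) (by linarith)
  rw [hc]
  have h1θ : 0 < 1 - θ := by linarith
  set c := Real.cos (π*(2*θ-1)/2) with hcdef
  rw [div_add_div _ _ (by positivity) (by positivity),
    div_le_div_iff₀ (by positivity) (by positivity)]
  nlinarith [mul_le_mul_of_nonneg_left hks (pow_nonneg hπ.le 4), sq_nonneg c,
    sq_nonneg (π*θ), pow_pos hπ 4]

private lemma normexp (θ : ℝ) :
    ‖Complex.exp ((θ:ℂ)*Complex.I) - 1‖ = 2*|Real.sin (θ/2)| := by
  have h : Complex.exp ((θ:ℂ)*Complex.I) - 1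
      = ((Real.cos θ - 1 : ℝ):ℂ) + ((Real.sin θ : ℝ):ℂ)*Complex.I := by
    rw [Complex.exp_mul_I]
    push_cast [Complex.ofReal_cos, Complex.ofReal_sin]
    ring
  rw [h, Complex.norm_add_mul_I]
  have hc : Real.cos (θ/2)^2 = 1/2 + Real.cos θ/2 := by
    have := Real.cos_sq (θ/2); rw [show 2*(θ/2) = θ by ring] at this; linarith
  have hs : Real.sin (θ/2)^2 = 1/2 - Real.cos θ/2 := by
    have := Real.sin_sq_add_cos_sq (θ/2); linarith
  have key : (Real.cos θ - 1)^2 + Real.sin θ^2 = (2*|Real.sin (θ/2)|)^2 := by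
    have := Real.sin_sq_add_cos_sq θ
    have habs : |Real.sin (θ/2)|^2 = Real.sin (θ/2)^2 := sq_abs _
    nlinarith
  rw [key, Real.sqrt_sq (by positivity)]

private lemma normS (α : ℝ) (N : ℕ) (h : Real.sin (π*α) ≠ 0) :
    ‖∑ k ∈ Finset.range N, Complex.exp (2*π*Complex.I*(α:ℂ)*(k:ℕ))‖
      = |Real.sin (π*N*α)| / |Real.sin (π*α)| := by
  set z := Complex.exp (2*π*Complex.I*(α:ℂ)) with hz
  have hterm : ∀ k : ℕ, Complex.exp (2*π*Complex.I*(α:ℂ)*(k:ℕ)) = z^k := by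
    intro k
    rw [hz, ← Complex.exp_nat_mul]
    ring_nf
  have hz1 : z ≠ 1 := by
    intro hzz
    rw [hz, Complex.exp_eq_one_iff] at hzz
    obtain ⟨m, hm⟩ := hzz
    have h2 : (2*π*Complex.I : ℂ) ≠ 0 := by
      simp [Complex.ext_iff, Real.pi_ne_zero, Complex.I_ne_zero]
    have : (α:ℂ) = (m:ℂ) := by
      have : (α:ℂ)*(2*π*Complex.I) = (m:ℂ)*(2*π*Complex.I) := by rw [← hm]; ring
      exact mul_right_cancel₀ h2 this
    have hαm : α = (m:ℝ) := by exact_mod_cast this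
    apply h
    rw [hαm, mul_comm, Real.sin_int_mul_pi]
  calc ‖∑ k ∈ Finset.range N, Complex.exp (2*π*Complex.I*(α:ℂ)*(k:ℕ))‖
      = ‖∑ k ∈ Finset.range N, z^k‖ := by simp_rw [hterm]
    _ = ‖(z^N - 1)/(z - 1)‖ := by rw [geom_sum_eq hz1]
    _ = ‖z^N - 1‖/‖z - 1‖ := norm_div _ _
    _ = |Real.sin (π*N*α)| / |Real.sin (π*α)| := by
        have hzN : z^N = Complex.exp (((2*π*N*α:ℝ):ℂ)*Complex.I) := by
          rw [hz, ← Complex.exp_nat_mul]; push_cast; ring_nf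
        have hz' : z = Complex.exp (((2*π*α:ℝ):ℂ)*Complex.I) := by
          rw [hz]; push_cast; ring_nf
        rw [hzN, hz', normexp, normexp]
        rw [show 2*π*(N:ℝ)*α/2 = π*N*α by ring, show 2*π*α/2 = π*α by ring]
        rw [mul_div_mul_left _ _ (two_ne_zero)]

/-- Theorem 1 (KLM07) -/
theorem stmt_14 (n : ℕ) (hn : 0 < n) (φ : ℝ) (hφ : φ ∈ Set.Ico (0 : ℝ) 1)
    (x : ℤ) (hx : (x : ℝ) / 2 ^ n ≤ φ) (hx' : φ ≤ ((x : ℝ) + 1) / 2 ^ n)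
    (P : ℤ → ℝ)
    (hP : ∀ y : ℤ, P y =
      ‖(1 / (2 : ℂ) ^ n) * ∑ k ∈ Finset.range (2 ^ n),
        Complex.exp (2 * π * Complex.I * ((φ : ℂ) - (y : ℂ) / 2 ^ n) * k)‖ ^ 2) :
    8 / π ^ 2 ≤ P x + P (x + 1) := by
  have hπ := Real.pi_pos
  have hπ8 : 8 ≤ π^2 := by nlinarith [Real.pi_gt_d6]
  have hPnn : ∀ y, 0 ≤ P y := fun y => by rw [hP]; positivity
  set Nr : ℝ := 2^n with hNr
  have hNr0 : (0:ℝ) < Nr := by positivity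
  have hNr2 : (2:ℝ) ≤ Nr := by
    rw [hNr]
    calc (2:ℝ) = 2^1 := (pow_one 2).symm
      _ ≤ 2^n := pow_le_pow_right₀ one_le_two hn
  -- value of P y via normS
  have hPval : ∀ y : ℤ, Real.sin (π*(φ - (y:ℝ)/Nr)) ≠ 0 →
      P y = Real.sin (π*Nr*(φ - (y:ℝ)/Nr))^2 / (Nr*|Real.sin (π*(φ - (y:ℝ)/Nr))|)^2 := by
    intro y hsin
    have hcast : (φ:ℂ) - (y:ℂ)/2^n = (((φ - (y:ℝ)/Nr : ℝ)):ℂ) := by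
      rw [hNr]; push_cast; ring
    have hnorm1 : ‖(1/(2:ℂ)^n)‖ = 1/Nr := by
      rw [hNr]
      simp [norm_div, norm_pow]
    rw [hP y, hcast]
    rw [norm_mul, hnorm1]
    rw [normS (φ - (y:ℝ)/Nr) (2^n) hsin]
    have hNcast : ((2^n : ℕ):ℝ) = Nr := by rw [hNr]; push_cast; ring
    rw [hNcast]
    rw [mul_pow, div_pow, div_pow, one_pow, div_mul_div_comm, one_mul,
      _root_.sq_abs (Real.sin (π*Nr*(φ - (y:ℝ)/Nr))), ← mul_pow]
  -- the deviation
  set δ : ℝ := φ - (x:ℝ)/Nr with hδ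
  have hδ0 : 0 ≤ δ := by
    rw [hδ, hNr]; linarith [hx]
  have hδ1 : δ ≤ 1/Nr := by
    rw [hδ, hNr]
    have : φ ≤ ((x:ℝ)+1)/2^n := hx'
    have h2 : ((x:ℝ)+1)/(2:ℝ)^n = (x:ℝ)/2^n + 1/2^n := by ring
    linarith [this, h2 ▸ this]
  -- trivial P = 1 case helper
  have hPone : ∀ y : ℤ, φ - (y:ℝ)/Nr = 0 → P y = 1 := by
    intro y hy
    have hcast : (φ:ℂ) - (y:ℂ)/2^n = 0 := by
      have : (φ:ℂ) - (y:ℂ)/2^n = (((φ - (y:ℝ)/Nr : ℝ)):ℂ) := by rw [hNr]; push_cast; ring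
      rw [this, hy]; norm_num
    rw [hP y, hcast]
    simp only [mul_zero, zero_mul, Complex.exp_zero, Finset.sum_const,
      Finset.card_range, nsmul_eq_mul, mul_one]
    rw [show ((2^n : ℕ):ℂ) = (2:ℂ)^n by push_cast; ring]
    rw [one_div, inv_mul_cancel₀ (pow_ne_zero n two_ne_zero : ((2:ℂ)^n) ≠ 0)]
    simp
  rcases eq_or_lt_of_le hδ0 with hδz | hδpos
  · -- δ = 0 : P x = 1
    have : P x = 1 := hPone x (by rw [← hδ]; exact hδz.symm)
    have h1 : 8/π^2 ≤ 1 := by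
      rw [div_le_one (by positivity)]; linarith
    linarith [hPnn (x+1)]
  rcases eq_or_lt_of_le hδ1 with hδN | hδlt
  · -- δ = 1/Nr : P (x+1) = 1
    have hy : φ - ((x+1 : ℤ):ℝ)/Nr = 0 := by
      push_cast
      rw [hδ] at hδN
      field_simp at hδN ⊢
      linarith [hδN]
    have : P (x+1) = 1 := hPone (x+1) hy
    have h1 : 8/π^2 ≤ 1 := by
      rw [div_le_one (by positivity)]; linarith
    linarith [hPnn x]
  -- main case
  set θ : ℝ := Nr*δ with hθ
  have hθ0 : 0 < θ := by positivity
  have hθ1 : θ < 1 := by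
    rw [hθ]
    calc Nr*δ < Nr*(1/Nr) := by apply mul_lt_mul_of_pos_left hδlt hNr0
      _ = 1 := by field_simp
  have h1θ : 0 < 1 - θ := by linarith
  have hNhalf : 1/Nr ≤ 1/2 := by
    rw [div_le_div_iff₀ hNr0 two_pos]; linarith
  have hδhalf : δ < 1/2 := lt_of_lt_of_le hδlt hNhalf
  have hsinθnn : 0 ≤ Real.sin (π*θ) := by
    apply Real.sin_nonneg_of_nonneg_of_le_pi
    · positivity
    · nlinarith
  have hsinδ : 0 < Real.sin (π*δ) := by
    apply Real.sin_pos_of_pos_of_lt_pi (by positivity)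
    nlinarith
  have hPx : Real.sin (π*θ)^2/(π*θ)^2 ≤ P x := by
    have hval := hPval x (by rw [← hδ]; exact ne_of_gt hsinδ)
    rw [← hδ] at hval
    rw [hval, abs_of_pos hsinδ, show π*Nr*δ = π*θ by rw [hθ]; ring]
    have hle : (Nr*Real.sin (π*δ))^2 ≤ (π*θ)^2 := by
      have h1 : Nr*Real.sin (π*δ) ≤ Nr*(π*δ) :=
        mul_le_mul_of_nonneg_left (Real.sin_le (by positivity)) hNr0.le
      have h2 : Nr*(π*δ) = π*θ := by rw [hθ]; ring
      have h3 : 0 ≤ Nr*Real.sin (π*δ) := by positivity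
      calc (Nr*Real.sin (π*δ))^2 ≤ (Nr*(π*δ))^2 := pow_le_pow_left₀ h3 h1 2
        _ = (π*θ)^2 := by rw [h2]
    apply div_le_div_of_nonneg_left (sq_nonneg _) (by positivity) hle
  have hε : 0 < 1/Nr - δ := by linarith
  have hsinε : 0 < Real.sin (π*(1/Nr - δ)) := by
    apply Real.sin_pos_of_pos_of_lt_pi (by positivity)
    nlinarith
  have hα' : φ - ((x+1 : ℤ):ℝ)/Nr = -(1/Nr - δ) := by
    push_cast
    rw [hδ]; ring
  have hPx1 : Real.sin (π*θ)^2/(π*(1-θ))^2 ≤ P (x+1) := by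
    have hne : Real.sin (π*(φ - ((x+1 : ℤ):ℝ)/Nr)) ≠ 0 := by
      rw [hα', show π*(-(1/Nr - δ)) = -(π*(1/Nr - δ)) by ring, Real.sin_neg]
      exact neg_ne_zero.2 (ne_of_gt hsinε)
    have hval := hPval (x+1) hne
    rw [hα'] at hval
    rw [hval]
    rw [show π*(-(1/Nr - δ)) = -(π*(1/Nr - δ)) by ring, Real.sin_neg, abs_neg,
      abs_of_pos hsinε]
    rw [show π*Nr*(-(1/Nr - δ)) = -(π - π*θ) by rw [hθ]; field_simp,
      Real.sin_neg, neg_pow, Real.sin_pi_sub]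
    rw [show (-1:ℝ)^2 * Real.sin (π*θ)^2 = Real.sin (π*θ)^2 by ring]
    have hle : (Nr*Real.sin (π*(1/Nr - δ)))^2 ≤ (π*(1-θ))^2 := by
      have h1 : Nr*Real.sin (π*(1/Nr - δ)) ≤ Nr*(π*(1/Nr - δ)) :=
        mul_le_mul_of_nonneg_left (Real.sin_le (by positivity)) hNr0.le
      have h2 : Nr*(π*(1/Nr - δ)) = π*(1-θ) := by rw [hθ]; field_simp
      have h3 : 0 ≤ Nr*Real.sin (π*(1/Nr - δ)) := by positivity
      calc (Nr*Real.sin (π*(1/Nr - δ)))^2 ≤ (Nr*(π*(1/Nr - δ)))^2 := pow_le_pow_left₀ h3 h1 2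
        _ = (π*(1-θ))^2 := by rw [h2]
    apply div_le_div_of_nonneg_left (sq_nonneg _) (by positivity) hle
  calc 8/π^2 ≤ Real.sin (π*θ)^2/(π*θ)^2 + Real.sin (π*θ)^2/(π*(1-θ))^2 :=
        keyTheta θ hθ0 hθ1
    _ ≤ P x + P (x+1) := add_le_add hPx hPx1
end

section
/- For the geometric-sum amplitude in phase estimation: for any real δ with 0 < |δ| ≤ 1/2^{n+1}, (1/4^n)·sin²(2^n πδ)/sin²(πδ) ≥ sin²(2^n π δ)/(2^n π δ)² ≥ 4/π². In particular if |φ - y/2^n| ≤ 2^{-(n+1)} then the QPE measurement returns y with probability at least 4/π². -/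
open Real Complex Finset

lemma norm_exp_mul_I_sub_one (t : ℝ) :
    ‖Complex.exp ((t : ℂ) * Complex.I) - 1‖ = 2 * |Real.sin (t / 2)| := by
  have h : Complex.exp ((t : ℂ) * Complex.I) - 1 =
      ((Real.cos t - 1 : ℝ) : ℂ) + ((Real.sin t : ℝ) : ℂ) * Complex.I := by
    rw [Complex.exp_mul_I, ← Complex.ofReal_cos, ← Complex.ofReal_sin]
    push_cast
    ring
  rw [h]
  rw [show (((Real.cos t - 1 : ℝ) : ℂ) + ((Real.sin t : ℝ) : ℂ) * Complex.I)
      = Complex.mk (Real.cos t - 1) (Real.sin t) by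
    apply Complex.ext <;> simp [Complex.cos_ofReal_re, Complex.sin_ofReal_re]]
  rw [Complex.norm_def, Complex.normSq_mk]
  have hs : Real.sin (t / 2) ^ 2 = 1 / 2 - Real.cos t / 2 := by
    have := Real.sin_sq_eq_half_sub (t / 2)
    rwa [show 2 * (t / 2) = t by ring] at this
  have h4 : (Real.cos t - 1) * (Real.cos t - 1) + Real.sin t * Real.sin t
      = (2 * |Real.sin (t / 2)|) ^ 2 := by
    have hc := Real.sin_sq_add_cos_sq t
    have habs : |Real.sin (t / 2)| ^ 2 = Real.sin (t / 2) ^ 2 := sq_abs _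
    nlinarith [hc, hs, habs]
  rw [h4, Real.sqrt_sq (by positivity)]

/-- Geometric-sum amplitude bound in phase estimation: for 0 < |δ| ≤ 1/2^{n+1},
(1/4^n)·sin²(2^nπδ)/sin²(πδ) ≥ sin²(2^nπδ)/(2^nπδ)² ≥ 4/π²; in particular for any δ
with |δ| ≤ 2^{-(n+1)} the QPE outcome probability |2^{-n} Σ_k e^{2πiδk}|² is ≥ 4/π². -/
theorem stmt_15 (n : ℕ) :
    (∀ δ : ℝ, 0 < |δ| → |δ| ≤ 1 / 2 ^ (n + 1) →
      Real.sin (2 ^ n * π * δ) ^ 2 / (2 ^ n * π * δ) ^ 2 ≤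
        (1 / 4 ^ n) * (Real.sin (2 ^ n * π * δ) ^ 2 / Real.sin (π * δ) ^ 2) ∧
      4 / π ^ 2 ≤ Real.sin (2 ^ n * π * δ) ^ 2 / (2 ^ n * π * δ) ^ 2) ∧
    (∀ δ : ℝ, |δ| ≤ 1 / 2 ^ (n + 1) →
      4 / π ^ 2 ≤ ‖(1 / (2 : ℂ) ^ n) * ∑ k ∈ Finset.range (2 ^ n),
        Complex.exp (2 * π * Complex.I * (δ : ℂ) * k)‖ ^ 2) := by
  have hπ := Real.pi_pos
  have h2n : (0 : ℝ) < 2 ^ n := by positivity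
  have h4n : (0 : ℝ) < 4 ^ n := by positivity
  have h2pow : (2:ℝ) ≤ 2 ^ (n+1) := by
    calc (2:ℝ) = 2 ^ 1 := (pow_one 2).symm
      _ ≤ 2 ^ (n+1) := by
        apply pow_le_pow_right₀ one_le_two (Nat.succ_le_succ (Nat.zero_le n))
  have h42 : ((4:ℝ)) ^ n = (2 ^ n) ^ 2 := by
    rw [show (4:ℝ) = 2 ^ 2 by norm_num, ← pow_mul, ← pow_mul, Nat.mul_comm]
  have key : ∀ δ : ℝ, 0 < |δ| → |δ| ≤ 1 / 2 ^ (n + 1) →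
      Real.sin (2 ^ n * π * δ) ^ 2 / (2 ^ n * π * δ) ^ 2 ≤
        (1 / 4 ^ n) * (Real.sin (2 ^ n * π * δ) ^ 2 / Real.sin (π * δ) ^ 2) ∧
      4 / π ^ 2 ≤ Real.sin (2 ^ n * π * δ) ^ 2 / (2 ^ n * π * δ) ^ 2 := by
    intro δ hδ0 hδ
    have hδne : δ ≠ 0 := fun h => by simp [h] at hδ0
    have hδhalf : |δ| ≤ 1 / 2 :=
      hδ.trans (one_div_le_one_div_of_le two_pos h2pow)
    -- sin (π δ) ≠ 0
    have hsin_ne : Real.sin (π * δ) ≠ 0 := by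
      intro h
      rw [Real.sin_eq_zero_iff_of_lt_of_lt
        (by nlinarith [abs_le.mp hδhalf]) (by nlinarith [abs_le.mp hδhalf])] at h
      exact hδne ((mul_eq_zero.mp h).resolve_left hπ.ne')
    have hsinsq : 0 < Real.sin (π * δ) ^ 2 := by positivity
    set x : ℝ := 2 ^ n * π * δ with hx
    have hxabs : |x| = 2 ^ n * π * |δ| := by
      rw [hx, abs_mul, abs_of_pos (by positivity : (0:ℝ) < 2 ^ n * π)]
    have hxpos : 0 < |x| := by rw [hxabs]; positivity
    have hxle : |x| ≤ π / 2 := by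
      rw [hxabs]
      calc 2 ^ n * π * |δ| ≤ 2 ^ n * π * (1 / 2 ^ (n + 1)) := by
            apply mul_le_mul_of_nonneg_left hδ (by positivity)
        _ = π / 2 := by rw [pow_succ]; field_simp
    have hxne : x ≠ 0 := fun h => by simp [h] at hxpos
    have hxsq : (0:ℝ) < x ^ 2 := by positivity
    constructor
    · -- first inequality
      have hsinle : Real.sin (π * δ) ^ 2 ≤ (π * δ) ^ 2 := Real.sin_sq_le_sq
      have hx2 : x ^ 2 = 4 ^ n * (π * δ) ^ 2 := by rw [hx, h42]; ring
      have hrhs : (1:ℝ) / 4 ^ n * (Real.sin x ^ 2 / Real.sin (π * δ) ^ 2)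
          = Real.sin x ^ 2 / (4 ^ n * Real.sin (π * δ) ^ 2) := by
        field_simp
      rw [hx2, hrhs]
      gcongr
    · -- second inequality
      have hbound : 2 / π * |x| ≤ |Real.sin x| := Real.mul_abs_le_abs_sin hxle
      have hnn : (0:ℝ) ≤ 2 / π * |x| := by positivity
      rw [le_div_iff₀ hxsq, ← _root_.sq_abs x, ← _root_.sq_abs (Real.sin x)]
      have hmul : (2 / π * |x|) * (2 / π * |x|) ≤ |Real.sin x| * |Real.sin x| :=
        mul_le_mul hbound hbound hnn (hnn.trans hbound)
      have ha : (2 / π * |x|) * (2 / π * |x|) = 4 / π ^ 2 * |x| ^ 2 := by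
        ring
      nlinarith [hmul, ha]
  refine ⟨key, ?_⟩
  intro δ hδ
  rcases eq_or_ne δ 0 with rfl | hδne
  · simp only [Complex.ofReal_zero, mul_zero, zero_mul, Complex.exp_zero]
    rw [Finset.sum_const, Finset.card_range, nsmul_eq_mul, mul_one]
    have h1 : (1 / (2:ℂ) ^ n) * (2 ^ n : ℕ) = 1 := by
      push_cast
      field_simp
    rw [h1, norm_one, one_pow, div_le_one (by positivity)]
    nlinarith [Real.pi_gt_three]
  · have hδ0 : 0 < |δ| := abs_pos.mpr hδne
    obtain ⟨h1, h2⟩ := key δ hδ0 hδ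
    have hδhalf : |δ| ≤ 1 / 2 :=
      hδ.trans (one_div_le_one_div_of_le two_pos h2pow)
    have hsin_ne : Real.sin (π * δ) ≠ 0 := by
      intro h
      rw [Real.sin_eq_zero_iff_of_lt_of_lt
        (by nlinarith [abs_le.mp hδhalf]) (by nlinarith [abs_le.mp hδhalf])] at h
      exact hδne ((mul_eq_zero.mp h).resolve_left hπ.ne')
    set z : ℂ := Complex.exp (((2 * π * δ : ℝ) : ℂ) * Complex.I) with hz
    have hzne : z ≠ 1 := by
      intro h
      have hn := norm_exp_mul_I_sub_one (2 * π * δ)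
      rw [← hz, h, sub_self, norm_zero, show (2 * π * δ) / 2 = π * δ by ring] at hn
      exact hsin_ne (abs_eq_zero.mp (by linarith [abs_nonneg (Real.sin (π * δ))]))
    have hterm : ∀ k : ℕ, Complex.exp (2 * π * Complex.I * (δ : ℂ) * k) = z ^ k := by
      intro k
      rw [hz, ← Complex.exp_nat_mul]
      congr 1
      push_cast
      ring
    have hsum : ∑ k ∈ Finset.range (2 ^ n), Complex.exp (2 * π * Complex.I * (δ : ℂ) * k)
        = (z ^ (2 ^ n) - 1) / (z - 1) := by
      rw [← geom_sum_eq hzne]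
      exact Finset.sum_congr rfl fun k _ => hterm k
    have hzpow : z ^ (2 ^ n) = Complex.exp (((2 ^ n * (2 * π * δ) : ℝ) : ℂ) * Complex.I) := by
      rw [hz, ← Complex.exp_nat_mul]
      congr 1
      push_cast
      ring
    have hnorm_num : ‖z ^ (2 ^ n) - 1‖ = 2 * |Real.sin (2 ^ n * π * δ)| := by
      rw [hzpow, norm_exp_mul_I_sub_one]
      congr 2
      ring
    have hnorm_den : ‖z - 1‖ = 2 * |Real.sin (π * δ)| := by
      rw [hz, norm_exp_mul_I_sub_one]
      congr 2
      ring
    have hden_pos : 0 < |Real.sin (π * δ)| := abs_pos.mpr hsin_ne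
    have h2c : ‖(2:ℂ)‖ = 2 := by norm_num
    have hnormsum : ‖(1 / (2 : ℂ) ^ n) * ∑ k ∈ Finset.range (2 ^ n),
        Complex.exp (2 * π * Complex.I * (δ : ℂ) * k)‖ ^ 2
        = (1 / 4 ^ n) * (Real.sin (2 ^ n * π * δ) ^ 2 / Real.sin (π * δ) ^ 2) := by
      rw [hsum, norm_mul, norm_div, norm_div, hnorm_num, hnorm_den, norm_one, norm_pow, h2c]
      rw [h42]
      rw [mul_pow, div_pow, div_pow, mul_pow, mul_pow, one_pow, _root_.sq_abs, _root_.sq_abs]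
      field_simp
    rw [hnormsum]
    exact h2.trans h1
end
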